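/- Let V : [0,φ_b] → R be C² with V(0)=0, V'(0)=0, V''(0) ≥ 0, and V(φ) > 0 for all φ ∈ (0,φ_b]. Then the function φ ↦ √(V(φ)) is Lipschitz continuous on [0,φ_b]. -/

import Mathlib

open Set Filter Topology

set_option maxHeartbeats 1600000 in
theorem sqrtV_lipschitz (φ_b : ℝ) (hφb : 0 < φ_b) (V : ℝ → ℝ)
    (hV : ContDiffOn ℝ 2 V (Icc 0 φ_b))
    (hV0 : V 0 = 0)
    (hV1 : derivWithin V (Icc 0 φ_b) 0 = 0)
    (hV2 : 0 ≤ derivWithin (fun φ => derivWithin V (Icc 0 φ_b) φ) (Icc 0 φ_b) 0)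
    (hVpos : ∀ φ ∈ Ioc (0:ℝ) φ_b, 0 < V φ) :
    ∃ K : NNReal, LipschitzOnWith K (fun φ => Real.sqrt (V φ)) (Icc 0 φ_b) := by
  set s := Icc (0:ℝ) φ_b with hsdef
  have hsub : UniqueDiffOn ℝ s := uniqueDiffOn_Icc hφb
  set V' := derivWithin V s with hV'def
  have hVd : DifferentiableOn ℝ V s := hV.differentiableOn (by norm_num)
  have hV'c : ContDiffOn ℝ 1 V' s := hV.derivWithin hsub (by norm_num)
  have hV'd : DifferentiableOn ℝ V' s := hV'c.differentiableOn one_ne_zero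
  have hV''cont : ContinuousOn (derivWithin V' s) s := hV'c.continuousOn_derivWithin hsub le_rfl
  obtain ⟨M₀, hM₀⟩ := isCompact_Icc.exists_bound_of_continuousOn hV''cont
  set M := max M₀ 1 with hMdef
  have hM1 : (1:ℝ) ≤ M := le_max_right _ _
  have hMpos : (0:ℝ) < M := lt_of_lt_of_le one_pos hM1
  have hM : ∀ x ∈ s, ‖derivWithin V' s x‖ ≤ M := fun x hx => (hM₀ x hx).trans (le_max_left _ _)
  -- (A) V' is M-Lipschitz on s
  have hLip : ∀ x ∈ s, ∀ y ∈ s, |V' y - V' x| ≤ M * |y - x| := by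
    intro x hx y hy
    have := Convex.norm_image_sub_le_of_norm_hasDerivWithin_le
      (fun z hz => (hV'd z hz).hasDerivWithinAt) hM (convex_Icc _ _) hx hy
    simpa [Real.norm_eq_abs] using this
  have h0s : (0:ℝ) ∈ s := ⟨le_rfl, hφb.le⟩
  have hV'bound : ∀ x ∈ s, |V' x| ≤ M * x := by
    intro x hx
    have := hLip 0 h0s x hx
    simpa [hV1, abs_of_nonneg hx.1] using this
  -- nonnegativity of V
  have hVnn : ∀ x ∈ s, 0 ≤ V x := by
    intro x hx
    rcases eq_or_lt_of_le hx.1 with h | h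
    · rw [← h, hV0]
    · exact (hVpos x ⟨h, hx.2⟩).le
  -- (B) Taylor-type upper bound
  have hTaylor : ∀ x ∈ s, ∀ y ∈ s, V y ≤ V x + V' x * (y - x) + M / 2 * (y - x) ^ 2 := by
    intro x hx
    set F : ℝ → ℝ := fun w => V x + V' x * (w - x) + M / 2 * (w - x) ^ 2 - V w with hFdef
    have hFx : F x = 0 := by simp [hFdef]
    have hFcont : ContinuousOn F s :=
      ContinuousOn.sub (Continuous.continuousOn (by continuity)) hV.continuousOn
    have hFd : ∀ z ∈ Ioo (0:ℝ) φ_b, HasDerivAt F (V' x + M * (z - x) - V' z) z := by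
      intro z hz
      have hzs : z ∈ s := Ioo_subset_Icc_self hz
      have hnhds : s ∈ 𝓝 z := Icc_mem_nhds hz.1 hz.2
      have hVz : HasDerivAt V (V' z) z := ((hVd z hzs).hasDerivWithinAt).hasDerivAt hnhds
      have h1 : HasDerivAt (fun w => w - x) 1 z := (hasDerivAt_id z).sub_const x
      have h2 : HasDerivAt (fun w => V' x * (w - x)) (V' x * 1) z := h1.const_mul _
      have h3 : HasDerivAt (fun w => (w - x) ^ 2) ((2:ℕ) * (z - x) ^ 1 * 1) z := h1.pow 2
      have h4 : HasDerivAt (fun w => M / 2 * (w - x) ^ 2) (M / 2 * ((2:ℕ) * (z - x) ^ 1 * 1)) z :=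
        h3.const_mul _
      have h5 := ((h2.const_add (V x)).add h4).sub hVz
      exact h5.congr_deriv (by push_cast; ring)
    intro y hy
    rcases le_total x y with hxy | hxy
    · have hmono : MonotoneOn F (Icc x φ_b) := by
        apply monotoneOn_of_deriv_nonneg (convex_Icc _ _)
          (hFcont.mono (Icc_subset_Icc hx.1 le_rfl))
        · intro z hz
          rw [interior_Icc] at hz
          have hz' : z ∈ Ioo (0:ℝ) φ_b := ⟨lt_of_le_of_lt hx.1 hz.1, hz.2⟩
          exact ((hFd z hz').differentiableAt).differentiableWithinAt
        · intro z hz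
          rw [interior_Icc] at hz
          have hz' : z ∈ Ioo (0:ℝ) φ_b := ⟨lt_of_le_of_lt hx.1 hz.1, hz.2⟩
          rw [(hFd z hz').deriv]
          have h6 := hLip x hx z (Ioo_subset_Icc_self hz')
          rw [abs_of_nonneg (by linarith [hz.1] : (0:ℝ) ≤ z - x)] at h6
          have h7 := le_abs_self (V' z - V' x)
          linarith
      have hFle := hmono ⟨le_rfl, hx.2⟩ ⟨hxy, hy.2⟩ hxy
      rw [hFx] at hFle
      simp only [hFdef] at hFle
      linarith
    · have hanti : AntitoneOn F (Icc 0 x) := by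
        apply antitoneOn_of_deriv_nonpos (convex_Icc _ _)
          (hFcont.mono (Icc_subset_Icc le_rfl hx.2))
        · intro z hz
          rw [interior_Icc] at hz
          have hz' : z ∈ Ioo (0:ℝ) φ_b := ⟨hz.1, lt_of_lt_of_le hz.2 hx.2⟩
          exact ((hFd z hz').differentiableAt).differentiableWithinAt
        · intro z hz
          rw [interior_Icc] at hz
          have hz' : z ∈ Ioo (0:ℝ) φ_b := ⟨hz.1, lt_of_lt_of_le hz.2 hx.2⟩
          rw [(hFd z hz').deriv]
          have h6 := hLip z ⟨hz.1.le, hz'.2.le⟩ x hx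
          rw [abs_of_nonneg (by linarith [hz.2] : (0:ℝ) ≤ x - z)] at h6
          have h7 := le_abs_self (V' x - V' z)
          linarith
      have hFle := hanti ⟨hy.1, hxy⟩ ⟨hx.1, le_rfl⟩ hxy
      rw [hFx] at hFle
      simp only [hFdef] at hFle
      linarith
  -- (C) key gradient inequality on [0, φ_b/2]
  have hkey : ∀ x ∈ Icc (0:ℝ) (φ_b / 2), V' x ^ 2 ≤ 2 * M * V x := by
    intro x hx
    have hxs : x ∈ s := ⟨hx.1, by linarith [hx.2]⟩
    obtain ⟨t, htdef⟩ : ∃ t : ℝ, t = -(V' x) / M := ⟨_, rfl⟩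
    have habs : |t| ≤ x := by
      rw [htdef, abs_div, abs_neg, abs_of_pos hMpos, div_le_iff₀ hMpos]
      have := hV'bound x hxs
      linarith
    obtain ⟨ht1, ht2⟩ := abs_le.1 habs
    have hys : x + t ∈ s := ⟨by linarith [hx.1], by linarith [hx.2]⟩
    have hT := hTaylor x hxs (x + t) hys
    have h0 : 0 ≤ V (x + t) := hVnn _ hys
    have ht : t * M = -(V' x) := by
      rw [htdef]; exact div_mul_cancel₀ _ (ne_of_gt hMpos)
    rw [add_sub_cancel_left] at hT
    obtain ⟨A, hA⟩ : ∃ A, A = V x := ⟨_, rfl⟩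
    obtain ⟨B, hB⟩ : ∃ B, B = V (x + t) := ⟨_, rfl⟩
    obtain ⟨N, hN⟩ : ∃ N, N = M := ⟨_, rfl⟩
    obtain ⟨w, hw⟩ : ∃ w, w = V' x := ⟨_, rfl⟩
    have hNpos : 0 < N := by rw [hN]; exact hMpos
    rw [← hA, ← hw] at hT ⊢
    rw [← hB] at hT h0
    rw [← hN] at hT ⊢
    rw [← hN, ← hw] at ht
    have hwt : w = -(t * N) := by linarith
    rw [hwt] at hT ⊢
    have e1 : (0:ℝ) ≤ A + -(t * N) * t + N / 2 * t ^ 2 := le_trans h0 hT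
    have e2 := mul_le_mul_of_nonneg_left e1 hNpos.le
    nlinarith only [e2, hNpos, e1, sq_nonneg t]
  -- derivative of sqrt(V)
  have hg : ∀ x ∈ s, 0 < V x →
      HasDerivWithinAt (fun φ => Real.sqrt (V φ)) (V' x / (2 * Real.sqrt (V x))) s x := by
    intro x hx hVx
    have h1 : HasDerivAt Real.sqrt (1 / (2 * Real.sqrt (V x))) (V x) := Real.hasDerivAt_sqrt hVx.ne'
    have h2 : HasDerivWithinAt V (V' x) s x := (hVd x hx).hasDerivWithinAt
    have h3 : (fun φ => Real.sqrt (V φ)) = Real.sqrt ∘ V := rfl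
    rw [h3, show V' x / (2 * Real.sqrt (V x)) = 1 / (2 * Real.sqrt (V x)) * V' x by ring]
    exact h1.comp_hasDerivWithinAt x h2
  -- Lipschitz bound on subintervals where V > 0
  have hregion : ∀ a b C : ℝ, 0 ≤ a → b ≤ φ_b → (∀ x ∈ Icc a b, 0 < V x) →
      (∀ x ∈ Icc a b, |V' x| ≤ 2 * C * Real.sqrt (V x)) →
      ∀ x ∈ Icc a b, ∀ y ∈ Icc a b, |Real.sqrt (V y) - Real.sqrt (V x)| ≤ C * |y - x| := by
    intro a b C ha hb hpos hbound x hx y hy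
    have hsub' : Icc a b ⊆ s := Icc_subset_Icc ha hb
    have := Convex.norm_image_sub_le_of_norm_hasDerivWithin_le
      (f := fun φ => Real.sqrt (V φ)) (f' := fun z => V' z / (2 * Real.sqrt (V z)))
      (s := Icc a b) (C := C)
      (fun z hz => (hg z (hsub' hz) (hpos z hz)).mono hsub')
      (fun z hz => by
        have hVz := hpos z hz
        have hsq : (0:ℝ) < Real.sqrt (V z) := Real.sqrt_pos.2 hVz
        rw [Real.norm_eq_abs, abs_div, abs_of_pos (by positivity : (0:ℝ) < 2 * Real.sqrt (V z)),
          div_le_iff₀ (by positivity)]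
        calc |V' z| ≤ 2 * C * Real.sqrt (V z) := hbound z hz
          _ = C * (2 * Real.sqrt (V z)) := by ring)
      (convex_Icc a b) hx hy
    simpa [Real.norm_eq_abs] using this
  -- constants
  set m := φ_b / 2 with hmdef
  have hm0 : 0 < m := by positivity
  have hmb : m ≤ φ_b := by linarith
  set K₁ := Real.sqrt (M / 2) with hK1def
  have hK1nn : 0 ≤ K₁ := Real.sqrt_nonneg _
  have hK1bound : ∀ x ∈ Icc (0:ℝ) m, |V' x| ≤ 2 * K₁ * Real.sqrt (V x) := by
    intro x hx
    have h1 := hkey x hx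
    have hVxnn : 0 ≤ V x := hVnn x ⟨hx.1, hx.2.trans hmb⟩
    have h2 : |V' x| = Real.sqrt (V' x ^ 2) := (Real.sqrt_sq_eq_abs _).symm
    rw [h2]
    have h3 : 2 * K₁ * Real.sqrt (V x) = Real.sqrt (2 * M * V x) := by
      rw [hK1def, show (2:ℝ) * M * V x = 2 ^ 2 * (M / 2) * V x by ring,
        Real.sqrt_mul (by positivity), Real.sqrt_mul (by positivity),
        Real.sqrt_sq (by norm_num : (0:ℝ) ≤ 2)]
    rw [h3]
    exact Real.sqrt_le_sqrt h1
  -- minimum of V on [m, φ_b]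
  obtain ⟨z, hzmem, hzmin⟩ := isCompact_Icc.exists_isMinOn (nonempty_Icc.2 hmb)
    (hV.continuousOn.mono (Icc_subset_Icc hm0.le le_rfl))
  have hδ : 0 < V z := hVpos z ⟨lt_of_lt_of_le hm0 hzmem.1, hzmem.2⟩
  have hδs : 0 < Real.sqrt (V z) := Real.sqrt_pos.2 hδ
  set K₂ := M * φ_b / (2 * Real.sqrt (V z)) with hK2def
  have hK2nn : 0 ≤ K₂ := by positivity
  have hK2bound : ∀ x ∈ Icc m φ_b, |V' x| ≤ 2 * K₂ * Real.sqrt (V x) := by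
    intro x hx
    have hxs : x ∈ s := ⟨hm0.le.trans hx.1, hx.2⟩
    have h1 : |V' x| ≤ M * φ_b := (hV'bound x hxs).trans (by nlinarith [hx.2])
    have h2 : Real.sqrt (V z) ≤ Real.sqrt (V x) := Real.sqrt_le_sqrt (hzmin hx)
    calc |V' x| ≤ M * φ_b := h1
      _ ≤ M * φ_b * (Real.sqrt (V x) / Real.sqrt (V z)) :=
          le_mul_of_one_le_right (by positivity) ((one_le_div hδs).2 h2)
      _ = 2 * K₂ * Real.sqrt (V x) := by rw [hK2def]; field_simp
  set K := max K₁ K₂ with hKdef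
  have hKnn : 0 ≤ K := le_max_of_le_left hK1nn
  -- Lipschitz on (0, m] part including endpoint 0 by limit
  have claim1' : ∀ x y : ℝ, 0 < x → x ≤ y → y ≤ m →
      |Real.sqrt (V y) - Real.sqrt (V x)| ≤ K₁ * (y - x) := by
    intro x y hx0 hxy hym
    have := hregion x m K₁ hx0.le hmb
      (fun w hw => hVpos w ⟨lt_of_lt_of_le hx0 hw.1, hw.2.trans hmb⟩)
      (fun w hw => hK1bound w ⟨hx0.le.trans hw.1, hw.2⟩)
      x ⟨le_rfl, hxy.trans hym⟩ y ⟨hxy, hym⟩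
    rwa [abs_of_nonneg (by linarith : (0:ℝ) ≤ y - x)] at this
  have hgcont : ContinuousOn (fun φ => Real.sqrt (V φ)) s :=
    Real.continuous_sqrt.comp_continuousOn hV.continuousOn
  have claim0 : ∀ y ∈ Icc (0:ℝ) m, Real.sqrt (V y) ≤ K₁ * y := by
    intro y hy
    rcases eq_or_lt_of_le hy.1 with h | h
    · rw [← h, hV0, Real.sqrt_zero, mul_zero]
    · have hne : (𝓝[Ioc (0:ℝ) y] 0).NeBot := by
        apply mem_closure_iff_nhdsWithin_neBot.1
        rw [closure_Ioc h.ne]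
        exact ⟨le_rfl, h.le⟩
      have hIs : Ioc (0:ℝ) y ⊆ s := fun w hw => ⟨hw.1.le, hw.2.trans (hy.2.trans hmb)⟩
      have hlim : Tendsto (fun ε => K₁ * (y - ε) + Real.sqrt (V ε)) (𝓝[Ioc (0:ℝ) y] 0)
          (𝓝 (K₁ * y)) := by
        have t1 : Tendsto (fun ε : ℝ => K₁ * (y - ε)) (𝓝[Ioc (0:ℝ) y] 0) (𝓝 (K₁ * (y - 0))) :=
          ((continuous_const.mul (continuous_const.sub continuous_id)).tendsto 0).mono_left
            nhdsWithin_le_nhds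
        have t2 : Tendsto (fun ε => Real.sqrt (V ε)) (𝓝[Ioc (0:ℝ) y] 0) (𝓝 (Real.sqrt (V 0))) :=
          ((hgcont 0 h0s).mono hIs).tendsto
        have := t1.add t2
        simpa [hV0] using this
      apply ge_of_tendsto hlim
      filter_upwards [self_mem_nhdsWithin] with ε hε
      have := claim1' ε y hε.1 hε.2 hy.2
      have h2 := (abs_le.1 this).2
      linarith
  have claim1 : ∀ x ∈ Icc (0:ℝ) m, ∀ y ∈ Icc (0:ℝ) m, x ≤ y →
      |Real.sqrt (V y) - Real.sqrt (V x)| ≤ K₁ * (y - x) := by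
    intro x hx y hy hxy
    rcases eq_or_lt_of_le hx.1 with h | h
    · rw [← h, hV0, Real.sqrt_zero, sub_zero, ← h] at *
      rw [abs_of_nonneg (Real.sqrt_nonneg _), sub_zero]
      exact claim0 y hy
    · exact claim1' x y h hxy hy.2
  have claim2 : ∀ x ∈ Icc m φ_b, ∀ y ∈ Icc m φ_b, x ≤ y →
      |Real.sqrt (V y) - Real.sqrt (V x)| ≤ K₂ * (y - x) := by
    intro x hx y hy hxy
    have := hregion m φ_b K₂ hm0.le le_rfl
      (fun w hw => hVpos w ⟨lt_of_lt_of_le hm0 hw.1, hw.2⟩) hK2bound x hx y hy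
    rwa [abs_of_nonneg (by linarith : (0:ℝ) ≤ y - x)] at this
  have main : ∀ x ∈ s, ∀ y ∈ s, x ≤ y →
      |Real.sqrt (V y) - Real.sqrt (V x)| ≤ K * (y - x) := by
    intro x hx y hy hxy
    rcases le_total y m with hym | hmy
    · calc |Real.sqrt (V y) - Real.sqrt (V x)| ≤ K₁ * (y - x) :=
            claim1 x ⟨hx.1, hxy.trans hym⟩ y ⟨hx.1.trans hxy, hym⟩ hxy
        _ ≤ K * (y - x) := mul_le_mul_of_nonneg_right (le_max_left _ _) (by linarith)
    · rcases le_total m x with hmx | hxm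
      · calc |Real.sqrt (V y) - Real.sqrt (V x)| ≤ K₂ * (y - x) :=
              claim2 x ⟨hmx, hx.2⟩ y ⟨hmx.trans hxy, hy.2⟩ hxy
          _ ≤ K * (y - x) := mul_le_mul_of_nonneg_right (le_max_right _ _) (by linarith)
      · have h1 := claim1 x ⟨hx.1, hxm⟩ m ⟨hm0.le, le_rfl⟩ hxm
        have h2 := claim2 m ⟨le_rfl, hmb⟩ y ⟨hmy, hy.2⟩ hmy
        calc |Real.sqrt (V y) - Real.sqrt (V x)|
            ≤ |Real.sqrt (V y) - Real.sqrt (V m)| + |Real.sqrt (V m) - Real.sqrt (V x)| :=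
              abs_sub_le _ _ _
          _ ≤ K₂ * (y - m) + K₁ * (m - x) := add_le_add h2 h1
          _ ≤ K * (y - m) + K * (m - x) := add_le_add
              (mul_le_mul_of_nonneg_right (le_max_right _ _) (by linarith))
              (mul_le_mul_of_nonneg_right (le_max_left _ _) (by linarith))
          _ = K * (y - x) := by ring
  refine ⟨NNReal.mk K hKnn, ?_⟩
  rw [lipschitzOnWith_iff_dist_le_mul]
  intro x hx y hy
  rw [Real.dist_eq, Real.dist_eq]
  simp only [NNReal.coe_mk]
  rcases le_total x y with hxy | hyx
  · rw [abs_sub_comm (Real.sqrt (V x)), abs_sub_comm x y,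
      abs_of_nonneg (by linarith : (0:ℝ) ≤ y - x)]
    exact main x hx y hy hxy
  · rw [abs_of_nonneg (by linarith : (0:ℝ) ≤ x - y)]
    exact main y hy x hx hyx
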